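/- arXiv:2301.11695 — 5 statements merged into one kernel-verified Lean document; each statement's English description precedes it below -/
import Mathlib

section
/- Let C ≥ 2 and let ℓ : Δ^{C−1} → ℝ^C be a proper loss such that ℓ ∘ Π^{-1} is differentiable on the interior of Δ̃^{C−1}. Write ℓ_{−C} for the vector of the first C−1 partial losses and ℓ_C for the last partial loss. Then for every p̃ in the interior of Δ̃^{C−1}, writing p_C = 1 − Σ_{i=1}^{C−1} p̃_i, the Jacobians satisfy p̃^T J_{ℓ_{−C} ∘ Π^{-1}}(p̃) + p_C J_{ℓ_C ∘ Π^{-1}}(p̃) = 0, i.e., J_{ℓ_C ∘ Π^{-1}}(p̃) = −(p̃^T / p_C) J_{ℓ_{−C} ∘ Π^{-1}}(p̃). -/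
noncomputable section

/-- The probability simplex `Δ^C ⊆ ℝ^{d+1}` (here `C = d+1`). -/
def simplex (n : ℕ) : Set (Fin n → ℝ) :=
  {p | (∀ i, 0 ≤ p i) ∧ ∑ i, p i = 1}

/-- The interior of the projected probability simplex `Δ̃^{C-1} ⊆ ℝ^{C-1}` (here `C-1 = d`). -/
def projInterior (d : ℕ) : Set (Fin d → ℝ) :=
  {p | (∀ i, 0 < p i) ∧ ∑ i, p i < 1}

/-- The inverse projection `Π⁻¹ : Δ̃^{C-1} → Δ^{C-1}`,
`pt ↦ (pt₁, …, pt_{C-1}, 1 - ∑ i, pt i)`. -/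
def piInv (d : ℕ) (p : Fin d → ℝ) : Fin (d + 1) → ℝ :=
  Fin.snoc p (1 - ∑ i, p i)

/-- The conditional risk `L(p,q) = ∑ i, p i * ℓ_i(q)` of a loss `ℓ`. -/
def condRisk {n : ℕ} (ℓ : (Fin n → ℝ) → (Fin n → ℝ)) (p q : Fin n → ℝ) : ℝ :=
  ∑ i, p i * ℓ q i

/-- A loss is proper if `L(p,p) ≤ L(p,q)` on the simplex. -/
def Proper {n : ℕ} (ℓ : (Fin n → ℝ) → (Fin n → ℝ)) : Prop :=
  ∀ p ∈ simplex n, ∀ q ∈ simplex n, condRisk ℓ p p ≤ condRisk ℓ p q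

/-- The composition `ℓ ∘ Π⁻¹ : ℝ^{C-1} → ℝ^C`. -/
def lossComp (d : ℕ) (ℓ : (Fin (d + 1) → ℝ) → (Fin (d + 1) → ℝ)) :
    (Fin d → ℝ) → (Fin (d + 1) → ℝ) :=
  fun x => ℓ (piInv d x)

/-- The projected conditional Bayes risk `L̲̃(pt) = L(Π⁻¹ pt, Π⁻¹ pt)`. -/
def projBayes (d : ℕ) (ℓ : (Fin (d + 1) → ℝ) → (Fin (d + 1) → ℝ)) :
    (Fin d → ℝ) → ℝ :=
  fun x => condRisk ℓ (piInv d x) (piInv d x)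

/-- The gradient `∇L̲̃` of the projected conditional Bayes risk. -/
def gradPB (d : ℕ) (ℓ : (Fin (d + 1) → ℝ) → (Fin (d + 1) → ℝ)) :
    (Fin d → ℝ) → (Fin d → ℝ) :=
  fun x i => fderiv ℝ (projBayes d ℓ) x (Pi.single i 1)

/-- The Hessian `H_{L̲̃}(x) i j = ∂_j ∂_i L̲̃ (x)` of the projected conditional Bayes risk. -/
def hessPB (d : ℕ) (ℓ : (Fin (d + 1) → ℝ) → (Fin (d + 1) → ℝ))
    (x : Fin d → ℝ) (i j : Fin d) : ℝ :=
  fderiv ℝ (gradPB d ℓ) x (Pi.single j 1) i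

/-- The canonical link `ψ̃ = -∇L̲̃`. -/
def canLink (d : ℕ) (ℓ : (Fin (d + 1) → ℝ) → (Fin (d + 1) → ℝ)) :
    (Fin d → ℝ) → (Fin d → ℝ) :=
  fun x i => -(gradPB d ℓ x i)

end

lemma projInterior_isOpen (d : ℕ) : IsOpen (projInterior d) := by
  have h1 : projInterior d
      = (⋂ i, {p : Fin d → ℝ | 0 < p i}) ∩ {p | ∑ i, p i < 1} := by
    ext p; simp [projInterior, Set.mem_iInter]
  rw [h1]
  exact (isOpen_iInter_of_finite fun i =>
      isOpen_lt continuous_const (continuous_apply i)).inter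
    (isOpen_lt (by continuity) continuous_const)

lemma piInv_mem_simplex {d : ℕ} {x : Fin d → ℝ} (hx : x ∈ projInterior d) :
    piInv d x ∈ simplex (d + 1) := by
  obtain ⟨hpos, hsum⟩ := hx
  constructor
  · intro i
    refine Fin.lastCases ?_ ?_ i
    · simp [piInv]; linarith
    · intro j; simp [piInv]; exact (hpos j).le
  · rw [Fin.sum_univ_castSucc]
    simp [piInv]

/-- Stationarity of a differentiable proper loss: for every pt in the interior of the
projected simplex, `ptᵀ J_{ℓ₋C ∘ Π⁻¹}(pt) + p_C J_{ℓ_C ∘ Π⁻¹}(pt) = 0`. -/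
theorem stmt_4 (d : ℕ) (hd : 1 ≤ d)
    (ℓ : (Fin (d + 1) → ℝ) → (Fin (d + 1) → ℝ)) (hproper : Proper ℓ)
    (hdiff : ∀ pt ∈ projInterior d, DifferentiableAt ℝ (lossComp d ℓ) pt) :
    ∀ pt ∈ projInterior d, ∀ v : Fin d → ℝ,
      (∑ i : Fin d, pt i * fderiv ℝ (lossComp d ℓ) pt v i.castSucc)
        + (1 - ∑ i, pt i) * fderiv ℝ (lossComp d ℓ) pt v (Fin.last d) = 0 := by
  intro pt hpt v
  set c : Fin (d + 1) → ℝ := piInv d pt with hc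
  set D := fderiv ℝ (lossComp d ℓ) pt with hD
  set f : (Fin d → ℝ) → ℝ := fun x => ∑ i, c i * lossComp d ℓ x i with hf
  -- derivative of f
  have hDa : HasFDerivAt (lossComp d ℓ) D pt := (hdiff pt hpt).hasFDerivAt
  have hgi : ∀ i : Fin (d + 1), HasFDerivAt (fun x => lossComp d ℓ x i)
      ((ContinuousLinearMap.proj i).comp D) pt := fun i => by
    exact ((ContinuousLinearMap.proj (R := ℝ) (φ := fun _ : Fin (d+1) => ℝ)
      i).hasFDerivAt).comp pt hDa
  have hfd : HasFDerivAt f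
      (∑ i, c i • (ContinuousLinearMap.proj i).comp D) pt := by
    have := HasFDerivAt.fun_sum (u := (Finset.univ : Finset (Fin (d+1))))
      (fun i _ => (hgi i).const_mul (c i))
    simpa [hf] using this
  -- local minimum
  have hmin : IsLocalMin f pt := by
    have hnb : projInterior d ∈ nhds pt := (projInterior_isOpen d).mem_nhds hpt
    filter_upwards [hnb] with x hx
    have := hproper (piInv d pt) (piInv_mem_simplex hpt)
      (piInv d x) (piInv_mem_simplex hx)
    simpa [hf, condRisk, lossComp, hc] using this
  have hzero : (∑ i, c i • (ContinuousLinearMap.proj i).comp D) = 0 :=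
    hmin.hasFDerivAt_eq_zero hfd
  have hzv : (∑ i : Fin (d+1), c i * D v i) = 0 := by
    have := congrArg (fun (L : (Fin d → ℝ) →L[ℝ] ℝ) => L v) hzero
    simpa using this
  rw [Fin.sum_univ_castSucc] at hzv
  have hcl : c (Fin.last d) = 1 - ∑ i, pt i := by simp [hc, piInv]
  have hcc : ∀ i : Fin d, c i.castSucc = pt i := fun i => by simp [hc, piInv]
  calc (∑ i : Fin d, pt i * D v i.castSucc) + (1 - ∑ i, pt i) * D v (Fin.last d)
      = (∑ i : Fin d, c i.castSucc * D v i.castSucc) + c (Fin.last d) * D v (Fin.last d) := by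
        rw [hcl]; exact congrArg (· + _) (Finset.sum_congr rfl fun i _ => by rw [hcc i])
    _ = 0 := hzv
end

section
/- Let C ≥ 2 and let ℓ : Δ^{C−1} → ℝ^C be a proper loss such that ℓ ∘ Π^{-1} is differentiable on the interior of Δ̃^{C−1}, with ℓ_{−C} the vector of the first C−1 partial losses and ℓ_C the last partial loss. Define the projected conditional Bayes risk L̲̃(p̃) = L(Π^{-1}(p̃), Π^{-1}(p̃)) where L(p,q) = Σ_{i=1}^C p_i ℓ_i(q). Then for every p̃ in the interior of Δ̃^{C−1}, L̲̃ is differentiable at p̃ with gradient ∇L̲̃(p̃) = (ℓ_{−C} ∘ Π^{-1})(p̃) − ((ℓ_C ∘ Π^{-1})(p̃)) · 1_{C−1}, where 1_{C−1} ∈ ℝ^{C−1} is the all-ones vector. -/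
/-- For a proper loss with `ℓ ∘ Π⁻¹` differentiable on the interior of the projected
simplex, the projected conditional Bayes risk `L̲̃` is differentiable there with gradient
`∇L̲̃(pt) = (ℓ₋C ∘ Π⁻¹)(pt) - ((ℓ_C ∘ Π⁻¹)(pt)) · 1_{C-1}`. -/
theorem stmt_5 (d : ℕ) (hd : 1 ≤ d)
    (ℓ : (Fin (d + 1) → ℝ) → (Fin (d + 1) → ℝ)) (hproper : Proper ℓ)
    (hdiff : ∀ pt ∈ projInterior d, DifferentiableAt ℝ (lossComp d ℓ) pt) :
    ∀ pt ∈ projInterior d,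
      DifferentiableAt ℝ (projBayes d ℓ) pt ∧
      ∀ i : Fin d,
        gradPB d ℓ pt i = ℓ (piInv d pt) i.castSucc - ℓ (piInv d pt) (Fin.last d) := by
  have hopen : IsOpen (projInterior d) := by
    have he : projInterior d
        = (⋂ i, {p : Fin d → ℝ | 0 < p i}) ∩ {p : Fin d → ℝ | ∑ i, p i < 1} := by
      ext p; simp [projInterior, Set.mem_iInter]
    rw [he]
    exact (isOpen_iInter_of_finite fun i =>
      isOpen_lt continuous_const (continuous_apply i)).inter
      (isOpen_lt (continuous_finset_sum _ fun i _ => continuous_apply i) continuous_const)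
  have hmem : ∀ q ∈ projInterior d, piInv d q ∈ simplex (d + 1) := by
    intro q hq
    obtain ⟨hpos, hsum⟩ := hq
    refine ⟨fun i => ?_, ?_⟩
    · refine Fin.lastCases ?_ (fun j => ?_) i
      · simp only [piInv, Fin.snoc_last]; linarith
      · simp only [piInv, Fin.snoc_castSucc]; exact (hpos j).le
    · simp [piInv, Fin.sum_univ_castSucc]
  intro pt hpt
  have hD : HasFDerivAt (lossComp d ℓ) (fderiv ℝ (lossComp d ℓ) pt) pt :=
    (hdiff pt hpt).hasFDerivAt
  set D := fderiv ℝ (lossComp d ℓ) pt with hDdef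
  have hcomp : ∀ i : Fin (d + 1), HasFDerivAt (fun q => lossComp d ℓ q i)
      ((ContinuousLinearMap.proj i : (Fin (d + 1) → ℝ) →L[ℝ] ℝ).comp D) pt := fun i =>
    (ContinuousLinearMap.proj i : (Fin (d + 1) → ℝ) →L[ℝ] ℝ).hasFDerivAt.comp pt hD
  -- envelope part: derivative of q ↦ ∑ᵢ (piInv pt)ᵢ · ℓᵢ(piInv q) vanishes at pt
  have hF : HasFDerivAt (fun q => ∑ i, piInv d pt i * lossComp d ℓ q i)
      (∑ i, piInv d pt i •
        ((ContinuousLinearMap.proj i : (Fin (d + 1) → ℝ) →L[ℝ] ℝ).comp D)) pt :=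
    HasFDerivAt.fun_sum fun i _ => (hcomp i).const_mul _
  have hminF : IsLocalMin (fun q => ∑ i, piInv d pt i * lossComp d ℓ q i) pt := by
    refine Filter.eventually_of_mem (hopen.mem_nhds hpt) ?_
    intro q hq
    exact hproper _ (hmem pt hpt) _ (hmem q hq)
  have hZ : (∑ i, piInv d pt i •
      ((ContinuousLinearMap.proj i : (Fin (d + 1) → ℝ) →L[ℝ] ℝ).comp D)) = 0 := by
    rw [← hF.fderiv]; exact hminF.fderiv_eq_zero
  -- derivative of projBayes
  have hPBeq : projBayes d ℓ = fun q =>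
      (∑ j : Fin d, q j * lossComp d ℓ q j.castSucc)
        + (1 - ∑ j, q j) * lossComp d ℓ q (Fin.last d) := by
    funext q
    simp [projBayes, condRisk, lossComp, piInv, Fin.sum_univ_castSucc]
  have hsumd : HasFDerivAt (fun q : Fin d → ℝ => ∑ j, q j)
      (∑ j, (ContinuousLinearMap.proj j : (Fin d → ℝ) →L[ℝ] ℝ)) pt :=
    HasFDerivAt.fun_sum fun j _ =>
      (ContinuousLinearMap.proj j : (Fin d → ℝ) →L[ℝ] ℝ).hasFDerivAt
  have hterm : ∀ j : Fin d,
      HasFDerivAt (fun q : Fin d → ℝ => q j * lossComp d ℓ q j.castSucc)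
        (pt j • ((ContinuousLinearMap.proj j.castSucc :
            (Fin (d + 1) → ℝ) →L[ℝ] ℝ).comp D)
          + lossComp d ℓ pt j.castSucc •
            (ContinuousLinearMap.proj j : (Fin d → ℝ) →L[ℝ] ℝ)) pt := fun j =>
    (ContinuousLinearMap.proj j : (Fin d → ℝ) →L[ℝ] ℝ).hasFDerivAt.mul (hcomp j.castSucc)
  have hlast : HasFDerivAt
      (fun q : Fin d → ℝ => (1 - ∑ j, q j) * lossComp d ℓ q (Fin.last d))
      ((1 - ∑ j, pt j) • ((ContinuousLinearMap.proj (Fin.last d) :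
          (Fin (d + 1) → ℝ) →L[ℝ] ℝ).comp D)
        + lossComp d ℓ pt (Fin.last d) •
          (-(∑ j, (ContinuousLinearMap.proj j : (Fin d → ℝ) →L[ℝ] ℝ)))) pt :=
    (hsumd.const_sub 1).mul (hcomp (Fin.last d))
  have hPB : HasFDerivAt (projBayes d ℓ)
      ((∑ j, (pt j • ((ContinuousLinearMap.proj j.castSucc :
            (Fin (d + 1) → ℝ) →L[ℝ] ℝ).comp D)
          + lossComp d ℓ pt j.castSucc •
            (ContinuousLinearMap.proj j : (Fin d → ℝ) →L[ℝ] ℝ)))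
        + ((1 - ∑ j, pt j) • ((ContinuousLinearMap.proj (Fin.last d) :
            (Fin (d + 1) → ℝ) →L[ℝ] ℝ).comp D)
          + lossComp d ℓ pt (Fin.last d) •
            (-(∑ j, (ContinuousLinearMap.proj j : (Fin d → ℝ) →L[ℝ] ℝ))))) pt := by
    rw [hPBeq]
    exact (HasFDerivAt.fun_sum fun j _ => hterm j).add hlast
  refine ⟨hPB.differentiableAt, fun i => ?_⟩
  have hgr : gradPB d ℓ pt i = fderiv ℝ (projBayes d ℓ) pt (Pi.single i 1) := rfl
  rw [hgr, hPB.fderiv]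
  have hZv : ∑ i', piInv d pt i' * D (Pi.single i 1) i' = 0 := by
    have := congrArg (fun (T : (Fin d → ℝ) →L[ℝ] (ℝ)) => T (Pi.single i 1)) hZ
    simpa using this
  rw [Fin.sum_univ_castSucc] at hZv
  simp only [piInv, Fin.snoc_castSucc, Fin.snoc_last] at hZv
  have hsingle : ∀ (f : Fin d → ℝ), ∑ j, f j * (Pi.single i 1 : Fin d → ℝ) j = f i := by
    intro f
    rw [Finset.sum_eq_single i]
    · simp
    · intro b _ hb; simp [Pi.single_apply, hb]
    · intro hi; exact absurd (Finset.mem_univ i) hi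
  have h1 : ∑ j, (Pi.single i 1 : Fin d → ℝ) j = 1 := by
    simpa using hsingle (fun _ => 1)
  simp only [ContinuousLinearMap.add_apply, ContinuousLinearMap.coe_sum',
    Finset.sum_apply, ContinuousLinearMap.coe_smul', Pi.smul_apply,
    ContinuousLinearMap.coe_comp', Function.comp_apply, ContinuousLinearMap.proj_apply,
    ContinuousLinearMap.neg_apply, smul_eq_mul, Finset.sum_add_distrib]
  rw [hsingle (fun j => lossComp d ℓ pt j.castSucc)]
  have h2 : ∑ j, pt j * D (Pi.single i 1) j.castSucc
      + (1 - ∑ j, pt j) * D (Pi.single i 1) (Fin.last d) = 0 := hZv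
  have h3 : (∑ j, (Pi.single i 1 : Fin d → ℝ) j) = 1 := h1
  have : lossComp d ℓ pt i.castSucc = ℓ (piInv d pt) i.castSucc := rfl
  have : lossComp d ℓ pt (Fin.last d) = ℓ (piInv d pt) (Fin.last d) := rfl
  simp only [lossComp] at *
  rw [h3]
  linarith [h2]
end

section
/- Let C ≥ 2 and let ℓ : Δ^{C−1} → ℝ^C be a proper loss such that ℓ ∘ Π^{-1} is differentiable on the interior of Δ̃^{C−1}, with ℓ_{−C} the vector of the first C−1 partial losses and ℓ_C the last partial loss, and let L̲̃(p̃) = L(Π^{-1}(p̃), Π^{-1}(p̃)) be the projected conditional Bayes risk. Then the canonical link ψ̃(p̃) = −∇L̲̃(p̃) satisfies, for every p̃ in the interior of Δ̃^{C−1}, ψ̃(p̃) = ((ℓ_C ∘ Π^{-1})(p̃)) · 1_{C−1} − (ℓ_{−C} ∘ Π^{-1})(p̃). -/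
open ContinuousLinearMap in
/-- For a proper loss with `ℓ ∘ Π⁻¹` differentiable on the interior of the projected
simplex, the canonical link `ψ̃ = -∇L̲̃` satisfies
`ψ̃(pt) = ((ℓ_C ∘ Π⁻¹)(pt)) · 1_{C-1} - (ℓ₋C ∘ Π⁻¹)(pt)`. -/
theorem stmt_7 (d : ℕ) (hd : 1 ≤ d)
    (ℓ : (Fin (d + 1) → ℝ) → (Fin (d + 1) → ℝ)) (hproper : Proper ℓ)
    (hdiff : ∀ pt ∈ projInterior d, DifferentiableAt ℝ (lossComp d ℓ) pt) :
    ∀ pt ∈ projInterior d,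
      DifferentiableAt ℝ (projBayes d ℓ) pt ∧
      ∀ i : Fin d,
        canLink d ℓ pt i = ℓ (piInv d pt) (Fin.last d) - ℓ (piInv d pt) i.castSucc := by
  intro pt hpt
  classical
  have hopen : IsOpen (projInterior d) := by
    have he : projInterior d = (⋂ i, (fun p : Fin d → ℝ => p i) ⁻¹' Set.Ioi 0) ∩
        ((fun p : Fin d → ℝ => ∑ i, p i) ⁻¹' Set.Iio 1) := by
      ext p; simp [projInterior, Set.mem_iInter]
    rw [he]
    exact (isOpen_iInter_of_finite fun i =>
      isOpen_Ioi.preimage (continuous_apply i)).inter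
      (isOpen_Iio.preimage (continuous_finset_sum _ fun i _ => continuous_apply i))
  have hmem : ∀ x ∈ projInterior d, piInv d x ∈ simplex (d + 1) := by
    intro x hx
    obtain ⟨h1, h2⟩ := hx
    constructor
    · intro k
      induction k using Fin.lastCases with
      | last => simp only [piInv, Fin.snoc_last]; linarith
      | cast j => simpa [piInv] using (h1 j).le
    · rw [Fin.sum_univ_castSucc]; simp [piInv]
  set g := lossComp d ℓ with hg_def
  set L' := fderiv ℝ g pt with hL'
  have hg : HasFDerivAt g L' pt := (hdiff pt hpt).hasFDerivAt
  set p : Fin (d + 1) → ℝ := piInv d pt with hp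
  set S : (Fin d → ℝ) →L[ℝ] ℝ := ∑ j, ContinuousLinearMap.proj j with hS_def
  have hSapp : ∀ v : Fin d → ℝ, S v = ∑ j, v j := by
    intro v; simp [hS_def]
  set f : ∀ _ : Fin (d + 1), (Fin d → ℝ) →L[ℝ] ℝ :=
    fun k => Fin.lastCases (-S) (fun j => ContinuousLinearMap.proj j) k with hf_def
  set P' : (Fin d → ℝ) →L[ℝ] (Fin (d + 1) → ℝ) := ContinuousLinearMap.pi f with hP'
  have hpiInv : HasFDerivAt (piInv d) P' pt := by
    rw [hasFDerivAt_pi']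
    intro k
    rw [hP', ContinuousLinearMap.proj_pi]
    induction k using Fin.lastCases with
    | last =>
      have h1 : (fun x : Fin d → ℝ => piInv d x (Fin.last d)) =
          fun x : Fin d → ℝ => 1 - ∑ j, x j := by
        funext x; simp [piInv]
      rw [h1, hf_def]
      simp only [Fin.lastCases_last]
      simpa using ((hasFDerivAt_const (1 : ℝ) pt).fun_sub
        (HasFDerivAt.fun_sum fun j _ =>
          (ContinuousLinearMap.proj (R := ℝ) (φ := fun _ : Fin d => ℝ) j).hasFDerivAt))
    | cast j =>
      have h1 : (fun x : Fin d → ℝ => piInv d x j.castSucc) = fun x : Fin d → ℝ => x j := by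
        funext x; simp [piInv]
      rw [h1, hf_def]
      simp only [Fin.lastCases_castSucc]
      exact (ContinuousLinearMap.proj (R := ℝ) (φ := fun _ : Fin d => ℝ) j).hasFDerivAt
  have hgk : ∀ k : Fin (d + 1), HasFDerivAt (fun x => g x k)
      ((ContinuousLinearMap.proj k).comp L') pt := fun k =>
    (ContinuousLinearMap.proj (R := ℝ) (φ := fun _ : Fin (d+1) => ℝ) k).hasFDerivAt.comp pt hg
  have hpik : ∀ k : Fin (d + 1), HasFDerivAt (fun x => piInv d x k)
      ((ContinuousLinearMap.proj k).comp P') pt := fun k =>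
    (ContinuousLinearMap.proj (R := ℝ) (φ := fun _ : Fin (d+1) => ℝ) k).hasFDerivAt.comp pt hpiInv
  -- properness: the fderiv of x ↦ ∑ k, p k * g x k vanishes at pt
  set DF : (Fin d → ℝ) →L[ℝ] ℝ :=
    ∑ k, p k • ((ContinuousLinearMap.proj k).comp L') with hDF
  have hF : HasFDerivAt (fun x => ∑ k, p k * g x k) DF pt := by
    rw [hDF]
    exact HasFDerivAt.fun_sum fun k _ => (hgk k).const_mul (p k)
  have hmin : IsLocalMin (fun x => ∑ k, p k * g x k) pt := by
    have hev : ∀ᶠ x in nhds pt, x ∈ projInterior d := hopen.mem_nhds hpt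
    refine hev.mono fun x hx => ?_
    have := hproper p (hmem pt hpt) (piInv d x) (hmem x hx)
    simpa [condRisk, hg_def, lossComp, hp] using this
  have hDF0 : DF = 0 := by rw [← hF.fderiv]; exact hmin.fderiv_eq_zero
  have hzero : ∀ v : Fin d → ℝ, ∑ k, p k * L' v k = 0 := by
    intro v
    have := congrArg (fun T : (Fin d → ℝ) →L[ℝ] ℝ => T v) hDF0
    simpa [hDF, ContinuousLinearMap.sum_apply] using this
  -- main derivative
  set D : (Fin d → ℝ) →L[ℝ] ℝ :=
    ∑ k, (p k • ((ContinuousLinearMap.proj k).comp L') +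
      g pt k • ((ContinuousLinearMap.proj k).comp P')) with hD
  have hPB : HasFDerivAt (projBayes d ℓ) D pt := by
    have he : projBayes d ℓ = fun x => ∑ k, piInv d x k * g x k := rfl
    rw [he, hD]
    exact HasFDerivAt.fun_sum fun k _ => (hpik k).mul (hgk k)
  have hfapp : ∀ (i : Fin d), ∀ k : Fin (d + 1), P' (Pi.single i 1) k = f k (Pi.single i 1) := by
    intro i k; rw [hP']; rfl
  have hDapp : ∀ i : Fin d, D (Pi.single i 1) = g pt i.castSucc - g pt (Fin.last d) := by
    intro i
    rw [hD]
    simp only [ContinuousLinearMap.sum_apply, ContinuousLinearMap.add_apply,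
      ContinuousLinearMap.smul_apply, ContinuousLinearMap.coe_comp', Function.comp_apply,
      ContinuousLinearMap.proj_apply, smul_eq_mul]
    rw [Finset.sum_add_distrib, hzero (Pi.single i 1), zero_add]
    have hrw : ∀ k : Fin (d + 1), P' (Pi.single i 1) k = f k (Pi.single i 1) := hfapp i
    rw [Fin.sum_univ_castSucc]
    have hlast : P' (Pi.single i 1) (Fin.last d) = -1 := by
      rw [hrw, hf_def]
      simp only [Fin.lastCases_last, ContinuousLinearMap.neg_apply, hSapp]
      simp
    have hcast : ∀ j : Fin d, P' (Pi.single i 1) j.castSucc = (Pi.single i 1 : Fin d → ℝ) j := by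
      intro j
      rw [hrw, hf_def]
      simp [Fin.lastCases_castSucc]
    simp only [hlast, hcast]
    rw [Finset.sum_congr rfl (fun j _ => by rw [Pi.single_apply])]
    simp [Finset.mul_sum, mul_ite]
    ring
  refine ⟨hPB.differentiableAt, fun i => ?_⟩
  have hgrad : gradPB d ℓ pt i = D (Pi.single i 1) := by
    unfold gradPB; rw [hPB.fderiv]
  show -(gradPB d ℓ pt i) = _
  rw [hgrad, hDapp i]
  show -(ℓ (piInv d pt) i.castSucc - ℓ (piInv d pt) (Fin.last d)) = _
  ring
end

section
/- Let C ≥ 2, let ℓ : Δ^{C−1} → ℝ^C be a proper loss with ℓ_{−C} the vector of the first C−1 partial losses and ℓ_C the last partial loss, and let L̲̃(p̃) = L(Π^{-1}(p̃), Π^{-1}(p̃)) be the projected conditional Bayes risk. Suppose L̲̃ is differentiable on the interior of Δ̃^{C−1} and let ψ̃ = −∇L̲̃ be the canonical link. Then for every p̃ in the interior of Δ̃^{C−1}: (a) (ℓ_C ∘ Π^{-1})(p̃) = (−L̲̃)^*(ψ̃(p̃)), and (b) (ℓ_{−C} ∘ Π^{-1})(p̃) = ((−L̲̃)^*(ψ̃(p̃)))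 · 1_{C−1} − ψ̃(p̃), where (−L̲̃)^*(x) = ⟨p̃, x⟩ + L̲̃(p̃) for x = ψ̃(p̃) is the Legendre–Fenchel conjugate of −L̲̃ evaluated at ψ̃(p̃), i.e., (−L̲̃)^*(ψ̃(p̃)) = ⟨p̃, ψ̃(p̃)⟩ + L̲̃(p̃). -/
/-- For a proper loss whose projected conditional Bayes risk `L̲̃` is differentiable on the
interior of the projected simplex, with canonical link `ψ̃ = -∇L̲̃`:
(a) `(ℓ_C ∘ Π⁻¹)(pt) = (-L̲̃)^*(ψ̃(pt)) = ⟨pt, ψ̃(pt)⟩ + L̲̃(pt)`, and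
(b) `(ℓ₋C ∘ Π⁻¹)(pt) = ((-L̲̃)^*(ψ̃(pt))) · 1_{C-1} - ψ̃(pt)`. -/
theorem stmt_10 (d : ℕ) (hd : 1 ≤ d)
    (ℓ : (Fin (d + 1) → ℝ) → (Fin (d + 1) → ℝ)) (hproper : Proper ℓ)
    (hdiff : ∀ pt ∈ projInterior d, DifferentiableAt ℝ (projBayes d ℓ) pt) :
    ∀ pt ∈ projInterior d,
      ℓ (piInv d pt) (Fin.last d)
          = (∑ i, pt i * canLink d ℓ pt i) + projBayes d ℓ pt ∧
      ∀ i : Fin d,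
        ℓ (piInv d pt) i.castSucc
          = ((∑ j, pt j * canLink d ℓ pt j) + projBayes d ℓ pt) - canLink d ℓ pt i := by
  intro pt hpt
  set a : Fin d → ℝ := fun i => ℓ (piInv d pt) i.castSucc with ha
  set b : ℝ := ℓ (piInv d pt) (Fin.last d) with hb
  -- membership of piInv in simplex
  have hmem : ∀ x ∈ projInterior d, piInv d x ∈ simplex (d + 1) := by
    intro x hx
    obtain ⟨hx1, hx2⟩ := hx
    constructor
    · intro i
      refine Fin.lastCases ?_ ?_ i
      · simp [piInv, Fin.snoc_last]; linarith
      · intro j; simp [piInv, Fin.snoc_castSucc]; exact (hx1 j).le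
    · simp [piInv, Fin.sum_univ_castSucc, Fin.snoc_castSucc, Fin.snoc_last]
  -- the affine majorant A x = ∑ x i * (a i - b) + b
  have hA : ∀ x : Fin d → ℝ,
      condRisk ℓ (piInv d x) (piInv d pt) = (∑ i, x i * (a i - b)) + b := by
    intro x
    have : condRisk ℓ (piInv d x) (piInv d pt)
        = ∑ i, x i * a i + (1 - ∑ i, x i) * b := by
      simp [condRisk, Fin.sum_univ_castSucc, piInv, Fin.snoc_castSucc, Fin.snoc_last, ha, hb]
    rw [this]
    have h1 : ∑ i, x i * (a i - b) = ∑ i, x i * a i - (∑ i, x i) * b := by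
      rw [Finset.sum_mul]
      rw [← Finset.sum_sub_distrib]
      exact Finset.sum_congr rfl fun i _ => by ring
    rw [h1]; ring
  -- openness of projInterior
  have hopen : IsOpen (projInterior d) := by
    have heq : projInterior d
        = (⋂ i, {p : Fin d → ℝ | 0 < p i}) ∩ {p : Fin d → ℝ | ∑ i, p i < 1} := by
      ext p; simp [projInterior, Set.mem_iInter]
    rw [heq]
    exact (isOpen_iInter_of_finite fun i =>
        isOpen_lt continuous_const (continuous_apply i)).inter
      (isOpen_lt (continuous_finset_sum _ fun i _ => continuous_apply i) continuous_const)
  -- derivative of the affine majorant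
  set L : (Fin d → ℝ) →L[ℝ] ℝ :=
    ∑ i, (a i - b) • (ContinuousLinearMap.proj i : (Fin d → ℝ) →L[ℝ] ℝ) with hL
  have hAdiff : HasFDerivAt (fun x : Fin d → ℝ => (∑ i, x i * (a i - b)) + b) L pt := by
    have h1 : HasFDerivAt (fun x : Fin d → ℝ => ∑ i, x i * (a i - b)) L pt := by
      rw [hL]
      exact HasFDerivAt.fun_sum fun i _ =>
        ((ContinuousLinearMap.proj i : (Fin d → ℝ) →L[ℝ] ℝ).hasFDerivAt).mul_const (a i - b)
    exact h1.add_const b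
  -- local minimum of the gap
  have hloc : IsLocalMin
      (fun x : Fin d → ℝ => ((∑ i, x i * (a i - b)) + b) - projBayes d ℓ x) pt := by
    have hpt0 : ((∑ i, pt i * (a i - b)) + b) - projBayes d ℓ pt = 0 := by
      rw [← hA pt]; simp [projBayes]
    refine Filter.eventually_of_mem (hopen.mem_nhds hpt) ?_
    intro x hx
    have h1 : projBayes d ℓ x ≤ condRisk ℓ (piInv d x) (piInv d pt) :=
      hproper _ (hmem x hx) _ (hmem pt hpt)
    rw [hA x] at h1
    simp only [hpt0]
    linarith
  -- fderiv of gap is zero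
  have hzero := hloc.fderiv_eq_zero
  have hdiffA : DifferentiableAt ℝ (fun x : Fin d → ℝ => (∑ i, x i * (a i - b)) + b) pt :=
    hAdiff.differentiableAt
  have hsub : fderiv ℝ
      (fun x : Fin d → ℝ => ((∑ i, x i * (a i - b)) + b) - projBayes d ℓ x) pt
      = L - fderiv ℝ (projBayes d ℓ) pt := by
    rw [fderiv_fun_sub hdiffA (hdiff pt hpt), hAdiff.fderiv]
  have hfd : fderiv ℝ (projBayes d ℓ) pt = L := by
    have := hzero
    rw [hsub] at this
    have h2 : L - fderiv ℝ (projBayes d ℓ) pt = 0 := this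
    have := sub_eq_zero.mp h2
    exact this.symm
  -- compute gradPB
  have hgrad : ∀ i, gradPB d ℓ pt i = a i - b := by
    intro i
    rw [gradPB, hfd, hL]
    rw [ContinuousLinearMap.sum_apply]
    rw [Finset.sum_eq_single i]
    · simp
    · intro j _ hji
      simp [Pi.single_apply, hji]
    · simp
  have hcan : ∀ i, canLink d ℓ pt i = b - a i := by
    intro i; rw [canLink, hgrad i]; ring
  -- projBayes value
  have hPB : projBayes d ℓ pt = ∑ i, pt i * a i + (1 - ∑ i, pt i) * b := by
    simp [projBayes, condRisk, Fin.sum_univ_castSucc, piInv, Fin.snoc_castSucc,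
      Fin.snoc_last, ha, hb]
  have hsum : ∑ i, pt i * canLink d ℓ pt i = (∑ i, pt i) * b - ∑ i, pt i * a i := by
    rw [Finset.sum_mul, ← Finset.sum_sub_distrib]
    exact Finset.sum_congr rfl fun i _ => by rw [hcan i]; ring
  have hmain : (∑ i, pt i * canLink d ℓ pt i) + projBayes d ℓ pt = b := by
    rw [hsum, hPB]; ring
  constructor
  · rw [hmain]
  · intro i
    rw [hmain, hcan i]
    simp [ha]
end

section
/- For C ≥ 2, the function f : ℝ^{C−1} → ℝ defined by f(x) = log(1 + Σ_{k=1}^{C−1} exp(x_k)) (called LogSumExp⁺) is strictly convex on ℝ^{C−1}. -/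
open Real Finset

lemma young_lt {t s u v : ℝ} (ht : 0 < t) (hs : 0 < s) (hts : t + s = 1)
    (hu : 0 < u) (hv : 0 < v) (huv : u ≠ v) :
    u ^ t * v ^ s < t * u + s * v := by
  have hlog := strictConcaveOn_log_Ioi.2 (Set.mem_Ioi.2 hu) (Set.mem_Ioi.2 hv) huv ht hs hts
  simp only [smul_eq_mul] at hlog
  have h1 : u ^ t * v ^ s = Real.exp (t * Real.log u + s * Real.log v) := by
    rw [Real.rpow_def_of_pos hu, Real.rpow_def_of_pos hv, ← Real.exp_add]
    ring_nf
  have h2 : t * u + s * v = Real.exp (Real.log (t * u + s * v)) := by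
    rw [Real.exp_log (by positivity)]
  rw [h1, h2]
  exact Real.exp_lt_exp.2 hlog

lemma young_le {t s u v : ℝ} (ht : 0 < t) (hs : 0 < s) (hts : t + s = 1)
    (hu : 0 < u) (hv : 0 < v) :
    u ^ t * v ^ s ≤ t * u + s * v := by
  rcases eq_or_ne u v with rfl | h
  · rw [← Real.rpow_add hu, hts, Real.rpow_one]
    nlinarith
  · exact (young_lt ht hs hts hu hv h).le

/-- The function `LogSumExp⁺ : ℝ^{C-1} → ℝ`, `x ↦ log (1 + ∑ k, exp (x k))`
(here `C - 1 = d` with `C ≥ 2`), is strictly convex. -/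
theorem stmt_11 (d : ℕ) (hd : 1 ≤ d) :
    StrictConvexOn ℝ (Set.univ : Set (Fin d → ℝ))
      (fun x => Real.log (1 + ∑ k, Real.exp (x k))) := by
  constructor
  · exact convex_univ
  intro x _ y _ hxy t s ht hs hts
  simp only
  set A : ℝ := 1 + ∑ k, Real.exp (x k) with hA
  set B : ℝ := 1 + ∑ k, Real.exp (y k) with hB
  have hApos : 0 < A := by positivity
  have hBpos : 0 < B := by positivity
  set c : ℝ := A ^ t * B ^ s with hc
  have hcpos : 0 < c := by positivity
  -- scaled young
  have scaled_le : ∀ u v : ℝ, 0 < u → 0 < v →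
      u ^ t * v ^ s ≤ (t * (u / A) + s * (v / B)) * c := by
    intro u v hu hv
    have : u ^ t * v ^ s = (u / A) ^ t * (v / B) ^ s * c := by
      rw [Real.div_rpow hu.le hApos.le, Real.div_rpow hv.le hBpos.le, hc]
      field_simp
    rw [this]
    exact mul_le_mul_of_nonneg_right (young_le ht hs hts (by positivity) (by positivity)) hcpos.le
  have scaled_lt : ∀ u v : ℝ, 0 < u → 0 < v → u / A ≠ v / B →
      u ^ t * v ^ s < (t * (u / A) + s * (v / B)) * c := by
    intro u v hu hv huv
    have : u ^ t * v ^ s = (u / A) ^ t * (v / B) ^ s * c := by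
      rw [Real.div_rpow hu.le hApos.le, Real.div_rpow hv.le hBpos.le, hc]
      field_simp
    rw [this]
    exact mul_lt_mul_of_pos_right (young_lt ht hs hts (by positivity) (by positivity) huv) hcpos
  -- main inequality
  have key : 1 + ∑ k, Real.exp ((t • x + s • y) k) < c := by
    have hterm : ∀ k, Real.exp ((t • x + s • y) k) = (Real.exp (x k)) ^ t * (Real.exp (y k)) ^ s := by
      intro k
      simp only [Pi.add_apply, Pi.smul_apply, smul_eq_mul]
      rw [Real.rpow_def_of_pos (Real.exp_pos _), Real.rpow_def_of_pos (Real.exp_pos _),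
        Real.log_exp, Real.log_exp, ← Real.exp_add]
      ring_nf
    have hsum_id : ((t * (1 / A) + s * (1 / B)) + ∑ k, (t * (Real.exp (x k) / A) + s * (Real.exp (y k) / B))) * c = c := by
      have h1 : ∑ k, (t * (Real.exp (x k) / A) + s * (Real.exp (y k) / B))
          = t * ((∑ k, Real.exp (x k)) / A) + s * ((∑ k, Real.exp (y k)) / B) := by
        rw [Finset.sum_add_distrib, ← Finset.mul_sum, ← Finset.mul_sum, ← Finset.sum_div,
          ← Finset.sum_div]
      rw [h1]
      have : (t * (1 / A) + s * (1 / B)) + (t * ((∑ k, Real.exp (x k)) / A) + s * ((∑ k, Real.exp (y k)) / B)) = 1 := by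
        have : t * (A / A) + s * (B / B) = 1 := by
          rw [div_self hApos.ne', div_self hBpos.ne']; linarith
        rw [← this, hA, hB]
        field_simp
        linear_combination (t + s + t * ∑ k, Real.exp (y k) + s * ∑ k, Real.exp (x k)) * hts
      rw [this, one_mul]
    rw [← hsum_id]
    simp only [hterm]
    rw [add_mul, Finset.sum_mul]
    rcases eq_or_ne A B with hAB | hAB
    · -- A = B, strictness in the sum
      obtain ⟨k0, hk0⟩ : ∃ k, x k ≠ y k := by
        by_contra h
        push_neg at h
        exact hxy (funext h)
      have hsum : ∑ k, (Real.exp (x k)) ^ t * (Real.exp (y k)) ^ s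
          < ∑ k, (t * (Real.exp (x k) / A) + s * (Real.exp (y k) / B)) * c := by
        apply Finset.sum_lt_sum
        · intro k _
          exact scaled_le _ _ (Real.exp_pos _) (Real.exp_pos _)
        · refine ⟨k0, Finset.mem_univ _, ?_⟩
          apply scaled_lt _ _ (Real.exp_pos _) (Real.exp_pos _)
          rw [← hAB]
          intro h
          field_simp at h
          exact hk0 (Real.exp_injective h)
      have h1 : (1 : ℝ) ≤ (t * (1 / A) + s * (1 / B)) * c := by
        have := scaled_le 1 1 one_pos one_pos
        simpa using this
      linarith
    · -- A ≠ B, strictness in the constant term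
      have h1 : (1 : ℝ) < (t * (1 / A) + s * (1 / B)) * c := by
        have := scaled_lt 1 1 one_pos one_pos (by
          simp only [one_div]
          intro h
          exact hAB (by field_simp at h; linarith))
        simpa using this
      have hsum : ∑ k, (Real.exp (x k)) ^ t * (Real.exp (y k)) ^ s
          ≤ ∑ k, (t * (Real.exp (x k) / A) + s * (Real.exp (y k) / B)) * c :=
        Finset.sum_le_sum fun k _ => scaled_le _ _ (Real.exp_pos _) (Real.exp_pos _)
      linarith
  calc Real.log (1 + ∑ k, Real.exp ((t • x + s • y) k))
      < Real.log c := Real.log_lt_log (by positivity) key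
    _ = t * Real.log A + s * Real.log B := by
        rw [hc, Real.log_mul (by positivity) (by positivity),
          Real.log_rpow hApos, Real.log_rpow hBpos]
    _ = t • Real.log A + s • Real.log B := by simp
end
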